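/- Let H be a real Hilbert space, Y1, …, Yn ∈ H not all lying on one line, w1, …, wn > 0, and Q ∈ H distinct from all Yᵢ. Then the operator A(h) = Σᵢ wᵢ[h/‖Q − Yᵢ‖ − ⟨h, Q − Yᵢ⟩(Q − Yᵢ)/‖Q − Yᵢ‖³] is positive semidefinite, i.e., ⟨A(h), h⟩ ≥ 0 for all h ∈ H, with ⟨A(h), h⟩ = Σᵢ wᵢ ‖P_h(Q − Yᵢ)‖²/‖Q − Yᵢ‖³ when ‖h‖ = 1, where P_h is projection onto the orthogonal complement of h. -/

import Mathlib

open scoped RealInnerProductSpace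

/-- The Hessian operator `A` of the weighted sum-of-distances objective is
positive semidefinite, and for a unit vector h its quadratic form equals the sum
of `wᵢ‖P_h(Q−Yᵢ)‖²/‖Q−Yᵢ‖³`, where `P_h(v) = v − ⟨v,h⟩h`. -/
theorem newton_hessian_posdef
    {H : Type*} [NormedAddCommGroup H] [InnerProductSpace ℝ H] [CompleteSpace H]
    {n : ℕ} (Y : Fin n → H) (w : Fin n → ℝ) (hw : ∀ i, 0 < w i) (Q : H)
    (hline : ¬ ∃ a b : H, ∀ i, ∃ t : ℝ, Y i = a + t • b)
    (hne : ∀ i, Q ≠ Y i) :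
    (∀ h : H,
        0 ≤ ⟪∑ i, w i • (‖Q - Y i‖⁻¹ • h -
              (⟪h, Q - Y i⟫ / ‖Q - Y i‖ ^ 3) • (Q - Y i)), h⟫) ∧
    (∀ h : H, ‖h‖ = 1 →
        ⟪∑ i, w i • (‖Q - Y i‖⁻¹ • h -
              (⟪h, Q - Y i⟫ / ‖Q - Y i‖ ^ 3) • (Q - Y i)), h⟫ =
          ∑ i, w i * ‖(Q - Y i) - ⟪Q - Y i, h⟫ • h‖ ^ 2 / ‖Q - Y i‖ ^ 3) := by
  have hv : ∀ i, (0:ℝ) < ‖Q - Y i‖ := fun i => by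
    rw [norm_pos_iff, sub_ne_zero]; exact hne i
  have key : ∀ (h : H) (i : Fin n),
      ⟪w i • (‖Q - Y i‖⁻¹ • h - (⟪h, Q - Y i⟫ / ‖Q - Y i‖ ^ 3) • (Q - Y i)), h⟫
        = w i * (‖h‖^2 / ‖Q - Y i‖ - ⟪h, Q - Y i⟫^2 / ‖Q - Y i‖^3) := by
    intro h i
    rw [real_inner_smul_left, inner_sub_left, real_inner_smul_left, real_inner_smul_left,
      real_inner_self_eq_norm_sq, real_inner_comm (Q - Y i) h]
    ring
  constructor
  · intro h
    rw [sum_inner]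
    apply Finset.sum_nonneg
    intro i _
    rw [key]
    have hcs : ⟪h, Q - Y i⟫^2 ≤ ‖h‖^2 * ‖Q - Y i‖^2 := by
      have h1 := abs_real_inner_le_norm h (Q - Y i)
      nlinarith [abs_nonneg ⟪h, Q - Y i⟫, sq_abs ⟪h, Q - Y i⟫, norm_nonneg h, norm_nonneg (Q - Y i)]
    have h3 : ‖Q - Y i‖^3 = ‖Q - Y i‖ * ‖Q - Y i‖^2 := by ring
    have : ⟪h, Q - Y i⟫^2 / ‖Q - Y i‖^3 ≤ ‖h‖^2 / ‖Q - Y i‖ := by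
      rw [div_le_div_iff₀ (pow_pos (hv i) 3) (hv i)]
      nlinarith [hv i, sq_nonneg ‖Q - Y i‖]
    have := hw i
    nlinarith
  · intro h hh
    rw [sum_inner]
    apply Finset.sum_congr rfl
    intro i _
    rw [key]
    have hnorm : ‖(Q - Y i) - ⟪Q - Y i, h⟫ • h‖ ^ 2 = ‖Q - Y i‖^2 - ⟪h, Q - Y i⟫^2 := by
      rw [norm_sub_sq_real, norm_smul, real_inner_smul_right, real_inner_comm (Q - Y i) h]
      simp [hh, mul_pow]
      ring
    rw [hnorm, hh]
    have h1 : ‖Q - Y i‖ ≠ 0 := (hv i).ne'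
    field_simp
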